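/- Let l ≥ 1 and let s_alt be the alternating binary string of length l defined by (s_alt)_i = i mod 2. Let s_alt^{(l-1)} be its (l-1)-fold expansion, a binary string of length l·4^{l-1}. Then every monochromatic D-diffsequence contained in {1,...,l·4^{l-1}} with respect to s_alt^{(l-1)} has length at most (3l² - 3l + 2)/2; that is, ψ_{s_alt^{(l-1)}}(0) ≤ (3l² - 3l + 2)/2. -/

import Mathlib

/-- The set of powers of two. -/
def D : Set ℕ := {d | ∃ i : ℕ, d = 2 ^ i}

/-- `pos i = ⌈i / 4⌉`. -/
def pos (i : ℕ) : ℕ := (i + 3) / 4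

/-- The expansion of a binary string: each `0` becomes `0011`, each `1` becomes `1100`.
For `1 ≤ m`, `s⁽¹⁾_m = s_{⌈m/4⌉}` if `m % 4 ∈ {1,2}` and `1 - s_{⌈m/4⌉}` otherwise. -/
def expand (s : ℕ → Fin 2) : ℕ → Fin 2 :=
  fun m => if m % 4 = 1 ∨ m % 4 = 2 then s (pos m) else 1 - s (pos m)

/-- `a 0 < a 1 < ⋯ < a (k-1)` is a `D`-diffsequence contained in `{1, …, n}`. -/
def IsDiffseqIn (n k : ℕ) (a : ℕ → ℕ) : Prop :=
  (∀ i < k, 1 ≤ a i ∧ a i ≤ n) ∧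
    ∀ i, i + 1 < k → a i < a (i + 1) ∧ a (i + 1) - a i ∈ D

/-- The set of hops of a length-`k` diffsequence `a` with respect to the string `s`:
indices `j` (0-based) with `a (j+1) - a j = 1` and `s (a (j+1)) ≠ s (a j)`. -/
def hops (s : ℕ → Fin 2) (k : ℕ) (a : ℕ → ℕ) : Finset ℕ :=
  (Finset.range (k - 1)).filter fun j => a (j + 1) = a j + 1 ∧ s (a (j + 1)) ≠ s (a j)

/-- `psi s n h` : the maximum length of a `D`-diffsequence contained in `{1, …, n}`
with at most `h` hops with respect to `s` (0 if there is none). -/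
noncomputable def psi (s : ℕ → Fin 2) (n h : ℕ) : ℕ :=
  sSup {k | ∃ a : ℕ → ℕ, IsDiffseqIn n k a ∧ (hops s k a).card ≤ h}

def par (r t : ℕ) : ℕ := ∑ j ∈ Finset.range r, t / 2 ^ (2 * j + 1)

def QP (r t : ℕ) : ℕ := (par r t + t / 4 ^ r) % 2

lemma par_succ (r t : ℕ) : par (r + 1) t = par r (t / 4) + t / 2 := by
  unfold par
  rw [Finset.sum_range_succ']
  have hterm : ∀ j ∈ Finset.range r, t / 2 ^ (2 * (j + 1) + 1) = (t / 4) / 2 ^ (2 * j + 1) := by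
    intro j _
    rw [Nat.div_div_eq_div_mul]
    congr 1
    have h23 : 2 * (j + 1) + 1 = (2 * j + 1) + 2 := by ring
    rw [h23, pow_add]
    ring
  rw [Finset.sum_congr rfl hterm]
  norm_num

lemma div4_pow (r t : ℕ) : t / 4 ^ (r + 1) = (t / 4) / 4 ^ r := by
  rw [Nat.div_div_eq_div_mul]
  congr 1
  rw [pow_succ]
  ring

lemma expand_val (S : ℕ → Fin 2) (t : ℕ) :
    (expand S (t + 1)).val = ((S (t / 4 + 1)).val + t / 2) % 2 := by
  unfold expand pos
  have hpos : (t + 1 + 3) / 4 = t / 4 + 1 := by omega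
  rw [hpos]
  by_cases hc : (t + 1) % 4 = 1 ∨ (t + 1) % 4 = 2
  · rw [if_pos hc]
    have h2 : t / 2 % 2 = 0 := by omega
    have hlt := (S (t / 4 + 1)).isLt
    omega
  · rw [if_neg hc]
    have h2 : t / 2 % 2 = 1 := by omega
    have hsub : ((1 : Fin 2) - S (t / 4 + 1)).val = 1 - (S (t / 4 + 1)).val := by
      generalize S (t / 4 + 1) = x
      fin_cases x <;> rfl
    have hlt := (S (t / 4 + 1)).isLt
    omega

lemma expand_iter_val (r : ℕ) : ∀ (s : ℕ → Fin 2) (t : ℕ),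
    ((expand^[r] s) (t + 1)).val = ((s (t / 4 ^ r + 1)).val + par r t) % 2 := by
  induction r with
  | zero =>
    intro s t
    have hlt := (s (t + 1)).isLt
    simp [par]
    omega
  | succ r ih =>
    intro s t
    rw [Function.iterate_succ', Function.comp_apply]
    rw [expand_val (expand^[r] s) t]
    rw [ih s (t / 4)]
    rw [par_succ, div4_pow]
    have hlt := (s (t / 4 / 4 ^ r + 1)).isLt
    omega

lemma QP_le_one (r t : ℕ) : QP r t ≤ 1 := by
  have := Nat.mod_lt (par r t + t / 4 ^ r) (show 0 < 2 by norm_num)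
  unfold QP; omega

lemma QP_zero (t : ℕ) : QP 0 t = t % 2 := by
  simp [QP, par]

lemma QP_succ (r t : ℕ) : QP (r + 1) t = (t / 2 + QP r (t / 4)) % 2 := by
  unfold QP
  rw [par_succ, div4_pow]
  omega

-- step split lemma
lemma step_split {x y : ℕ} (hxy : x < y) (hD : y - x ∈ D) :
    (x / 4 = y / 4 ∧ y ≤ x + 2) ∨
    (x / 4 < y / 4 ∧ y ≤ x + 2 ∧ y / 4 = x / 4 + 1 ∧ 2 ≤ x % 4 ∧ y % 4 ≤ 1) ∨
    (x % 4 = y % 4 ∧ x / 4 < y / 4 ∧ (y / 4 - x / 4) ∈ D) := by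
  obtain ⟨e, he⟩ := hD
  match e with
  | 0 =>
    have hy : y = x + 1 := by omega
    have : (x / 4 = y / 4 ∧ y ≤ x + 2) ∨
        (x / 4 < y / 4 ∧ y ≤ x + 2 ∧ y / 4 = x / 4 + 1 ∧ 2 ≤ x % 4 ∧ y % 4 ≤ 1) := by omega
    tauto
  | 1 =>
    have hy : y = x + 2 := by omega
    have : (x / 4 = y / 4 ∧ y ≤ x + 2) ∨
        (x / 4 < y / 4 ∧ y ≤ x + 2 ∧ y / 4 = x / 4 + 1 ∧ 2 ≤ x % 4 ∧ y % 4 ≤ 1) := by omega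
    tauto
  | e + 2 =>
    have h1 : (1 : ℕ) ≤ 2 ^ e := Nat.one_le_two_pow
    have he' : 2 ^ (e + 2) = 2 ^ e * 4 := by rw [pow_add]; norm_num
    have hy : y = x + 2 ^ e * 4 := by omega
    refine Or.inr (Or.inr ⟨by omega, by omega, ⟨e, by omega⟩⟩)

-- reset counting lemma
lemma reset_count {n : ℕ} (P : ℕ → Prop) (S T : Finset ℕ)
    (hSn : ∀ i ∈ S, i < n)
    (h1 : ∀ i ∈ S, P i ∧ ¬ P (i + 1))
    (h2 : ∀ j, j < n → ¬ P j → P (j + 1) → j ∈ T) :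
    S.card ≤ T.card + 1 ∧ (¬ P 0 → S.card ≤ T.card) := by
  classical
  set f : ℕ → ℕ := fun i => sInf {j | ∀ x, j ≤ x → x ≤ i → P x} with hf
  have hmem : ∀ i ∈ S, ∀ x, f i ≤ x → x ≤ i → P x := by
    intro i hi
    have hne : i ∈ {j | ∀ x, j ≤ x → x ≤ i → P x} := by
      intro x hx hx'
      have : x = i := le_antisymm hx' hx
      rw [this]; exact (h1 i hi).1
    exact Nat.sInf_mem ⟨i, hne⟩
  have hle : ∀ i ∈ S, f i ≤ i := by
    intro i hi
    apply Nat.sInf_le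
    intro x hx hx'
    have : x = i := le_antisymm hx' hx
    rw [this]; exact (h1 i hi).1
  have hinj : Set.InjOn f S := by
    intro i1 h1' i2 h2' heq
    by_contra hne
    rcases Nat.lt_or_ge i1 i2 with h | h
    · have hP : P (i1 + 1) := hmem i2 h2' (i1 + 1) (by
        have := hle i1 h1'; omega) (by omega)
      exact (h1 i1 h1').2 hP
    · have h' : i2 < i1 := by omega
      have hP : P (i2 + 1) := hmem i1 h1' (i2 + 1) (by
        have := hle i2 h2'; omega) (by omega)
      exact (h1 i2 h2').2 hP
  have hTmem : ∀ i ∈ S, f i ≠ 0 → f i - 1 ∈ T := by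
    intro i hi h0
    have hnP : ¬ P (f i - 1) := by
      intro hP
      have : f i - 1 ∈ {j | ∀ x, j ≤ x → x ≤ i → P x} := by
        intro x hx hx'
        rcases Nat.eq_or_lt_of_le hx with h | h
        · rw [← h]; exact hP
        · exact hmem i hi x (by omega) hx'
      have h' := Nat.sInf_le this
      have h'' : f i ≤ f i - 1 := h'
      omega
    have hP1 : P (f i - 1 + 1) := by
      have : f i - 1 + 1 = f i := by omega
      rw [this]
      exact hmem i hi (f i) le_rfl (hle i hi)
    exact h2 (f i - 1) (by have := hle i hi; have := hSn i hi; omega) hnP hP1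
  have hP0 : ∀ i ∈ S, f i = 0 → P 0 := by
    intro i hi h0
    have := hmem i hi 0 (by omega) (by omega)
    exact this
  have hcard : S.card = (S.image f).card := (Finset.card_image_of_injOn hinj).symm
  constructor
  · have hsub : S.image f ⊆ insert 0 (T.image (· + 1)) := by
      intro x hx
      obtain ⟨i, hi, rfl⟩ := Finset.mem_image.mp hx
      by_cases h0 : f i = 0
      · rw [h0]; exact Finset.mem_insert_self _ _
      · apply Finset.mem_insert_of_mem
        apply Finset.mem_image.mpr
        exact ⟨f i - 1, hTmem i hi h0, by omega⟩
    calc S.card = (S.image f).card := hcard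
      _ ≤ (insert 0 (T.image (· + 1))).card := Finset.card_le_card hsub
      _ ≤ (T.image (· + 1)).card + 1 := Finset.card_insert_le _ _
      _ ≤ T.card + 1 := by have := Finset.card_image_le (s := T) (f := (· + 1)); omega
  · intro hnP0
    have hsub : S.image f ⊆ T.image (· + 1) := by
      intro x hx
      obtain ⟨i, hi, rfl⟩ := Finset.mem_image.mp hx
      by_cases h0 : f i = 0
      · exact absurd (hP0 i hi h0) hnP0
      · apply Finset.mem_image.mpr
        exact ⟨f i - 1, hTmem i hi h0, by omega⟩
    calc S.card = (S.image f).card := hcard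
      _ ≤ (T.image (· + 1)).card := Finset.card_le_card hsub
      _ ≤ T.card := Finset.card_image_le

lemma chain_mono {k : ℕ} {t : ℕ → ℕ} (hinc : ∀ i, i + 1 < k → t i < t (i + 1)) :
    ∀ i j, i ≤ j → j < k → t i ≤ t j := by
  have key : ∀ d i, i + d < k → t i ≤ t (i + d) := by
    intro d
    induction d with
    | zero => intro i _; simp
    | succ d ih =>
      intro i hik
      have h1 : t i ≤ t (i + d) := ih i (by omega)
      have h2 : t (i + d) < t (i + d + 1) := hinc (i + d) (by omega)
      have h3 : i + (d + 1) = i + d + 1 := rfl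
      rw [h3]
      omega
  intro i j hij hjk
  have := key (j - i) i (by omega)
  have hji : i + (j - i) = j := by omega
  rwa [hji] at this

noncomputable def sel (t : ℕ → ℕ) (k : ℕ) : ℕ → ℕ
  | 0 => 0
  | m + 1 => sInf {j | sel t k m < j ∧ j < k ∧ t (sel t k m) / 4 < t j / 4}

theorem ML_step (r : ℕ)
  (ihr : ∀ (N h k : ℕ) (t : ℕ → ℕ),
    (∀ i < k, t i < N * 4 ^ r) →
    (∀ i, i + 1 < k → t i < t (i + 1) ∧ t (i + 1) - t i ∈ D) →
    (∀ j, j + 1 < k → QP r (t (j + 1)) ≠ QP r (t j) → t (j + 1) ≤ t j + 2) →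
    ((Finset.range (k - 1)).filter (fun j => QP r (t (j + 1)) ≠ QP r (t j))).card ≤ h →
    2 * k ≤ N + 1 + h + 6 * r * h + 3 * r ^ 2 + 2 * r)
  (N h k : ℕ) (t : ℕ → ℕ)
  (hbd : ∀ i < k, t i < N * 4 ^ (r + 1))
  (hinc : ∀ i, i + 1 < k → t i < t (i + 1) ∧ t (i + 1) - t i ∈ D)
  (hsm : ∀ j, j + 1 < k → QP (r + 1) (t (j + 1)) ≠ QP (r + 1) (t j) → t (j + 1) ≤ t j + 2)
  (hfl : ((Finset.range (k - 1)).filter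
      (fun j => QP (r + 1) (t (j + 1)) ≠ QP (r + 1) (t j))).card ≤ h) :
    2 * k ≤ N + 1 + h + 6 * (r + 1) * h + 3 * (r + 1) ^ 2 + 2 * (r + 1) := by
  rcases Nat.eq_zero_or_pos k with hk0 | hk0
  · subst hk0; omega
  have hmono : ∀ i j, i ≤ j → j < k → t i ≤ t j :=
    chain_mono (fun i hi => (hinc i hi).1)
  have hqmono : ∀ i j, i ≤ j → j < k → t i / 4 ≤ t j / 4 :=
    fun i j hij hjk => Nat.div_le_div_right (hmono i j hij hjk)
  -- step classification for each step
  have hstep : ∀ j, j + 1 < k →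
      (t j / 4 = t (j + 1) / 4 ∧ t (j + 1) ≤ t j + 2) ∨
      (t j / 4 < t (j + 1) / 4 ∧ t (j + 1) ≤ t j + 2 ∧ t (j + 1) / 4 = t j / 4 + 1 ∧
        2 ≤ t j % 4 ∧ t (j + 1) % 4 ≤ 1) ∨
      (t j % 4 = t (j + 1) % 4 ∧ t j / 4 < t (j + 1) / 4 ∧ (t (j + 1) / 4 - t j / 4) ∈ D) :=
    fun j hj => step_split (hinc j hj).1 (hinc j hj).2
  -- a big-cross step is never a flip, and preserves QP r of the quotient
  have hbigq : ∀ j, j + 1 < k → t j % 4 = t (j + 1) % 4 → t j / 4 < t (j + 1) / 4 →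
      QP r (t (j + 1) / 4) = QP r (t j / 4) := by
    intro j hj hm hq
    have hnf : QP (r + 1) (t (j + 1)) = QP (r + 1) (t j) := by
      by_contra hne
      have := hsm j hj hne
      omega
    have e1 := QP_succ r (t j)
    have e2 := QP_succ r (t (j + 1))
    have b1 := QP_le_one r (t j / 4)
    have b2 := QP_le_one r (t (j + 1) / 4)
    omega
  -- a within step that crosses the halves is a flip
  have hwithinflip : ∀ j, j + 1 < k → t j / 4 = t (j + 1) / 4 → t j % 4 ≤ 1 →
      2 ≤ t (j + 1) % 4 → QP (r + 1) (t (j + 1)) ≠ QP (r + 1) (t j) := by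
    intro j hj hq hx hy
    have e1 := QP_succ r (t j)
    have e2 := QP_succ r (t (j + 1))
    rw [hq] at e1
    have b2 := QP_le_one r (t (j + 1) / 4)
    omega
  set CA := (Finset.range (k - 1)).filter (fun j => t j / 4 < t (j + 1) / 4) with hCA
  set C := CA.card with hC
  set cnt : ℕ → ℕ :=
    fun p => ((Finset.Ico p (k - 1)).filter (fun j => t j / 4 < t (j + 1) / 4)).card with hcnt
  have hne : ∀ p, p < k → 0 < cnt p → ∃ j, p < j ∧ j < k ∧ t p / 4 < t j / 4 := by
    intro p hp hpos
    rw [hcnt] at hpos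
    obtain ⟨j, hj⟩ := Finset.card_pos.mp hpos
    rw [Finset.mem_filter, Finset.mem_Ico] at hj
    exact ⟨j + 1, by omega, by omega,
      lt_of_le_of_lt (hqmono p j hj.1.1 (by omega)) hj.2⟩
  have hcnt0 : cnt 0 = C := by
    rw [hcnt, hC, hCA, Finset.range_eq_Ico]
  -- the basic facts about one sInf step, given nonemptiness
  have hselstep : ∀ m, sel t k m < k → 0 < cnt (sel t k m) →
      sel t k m < sel t k (m + 1) ∧ sel t k (m + 1) < k ∧
      t (sel t k m) / 4 < t (sel t k (m + 1)) / 4 ∧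
      ∀ j, sel t k m ≤ j → j < sel t k (m + 1) → t j / 4 = t (sel t k m) / 4 := by
    intro m hmk hpos
    obtain ⟨j0, hj0⟩ := hne _ hmk hpos
    have hmem : sel t k (m + 1) ∈
        {j | sel t k m < j ∧ j < k ∧ t (sel t k m) / 4 < t j / 4} :=
      Nat.sInf_mem ⟨j0, hj0⟩
    obtain ⟨ha, hb, hq⟩ := hmem
    refine ⟨ha, hb, hq, ?_⟩
    intro j hj1 hj2
    rcases Nat.eq_or_lt_of_le hj1 with h | h
    · rw [← h]
    · by_contra hnejq
      have hle : t (sel t k m) / 4 ≤ t j / 4 := hqmono _ _ (by omega) (by omega)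
      have hjin : j ∈ {j | sel t k m < j ∧ j < k ∧ t (sel t k m) / 4 < t j / 4} :=
        ⟨h, by omega, by omega⟩
      have := Nat.sInf_le hjin
      have : sel t k (m + 1) ≤ j := this
      omega
  -- count decrement across one sInf step
  have hcntstep : ∀ m, sel t k m < k → 0 < cnt (sel t k m) →
      cnt (sel t k (m + 1)) + 1 = cnt (sel t k m) := by
    intro m hmk hpos
    obtain ⟨ha, hb, hq, hrun⟩ := hselstep m hmk hpos
    set s1 := sel t k (m + 1) with hs1
    set s0 := sel t k m with hs0
    have hsplit : Finset.Ico s0 (k - 1) = Finset.Ico s0 s1 ∪ Finset.Ico s1 (k - 1) :=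
      (Finset.Ico_union_Ico_eq_Ico (by omega) (by omega)).symm
    have hdisj : Disjoint ((Finset.Ico s0 s1).filter (fun j => t j / 4 < t (j + 1) / 4))
        ((Finset.Ico s1 (k - 1)).filter (fun j => t j / 4 < t (j + 1) / 4)) :=
      Finset.disjoint_filter_filter (Finset.Ico_disjoint_Ico_consecutive s0 s1 (k - 1))
    have hsing : (Finset.Ico s0 s1).filter (fun j => t j / 4 < t (j + 1) / 4) = {s1 - 1} := by
      apply Finset.eq_singleton_iff_unique_mem.mpr
      constructor
      · rw [Finset.mem_filter, Finset.mem_Ico]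
        have h11 : s1 - 1 + 1 = s1 := by omega
        refine ⟨⟨by omega, by omega⟩, ?_⟩
        rw [h11]
        rw [hrun (s1 - 1) (by omega) (by omega)]
        exact hq
      · intro j hj
        rw [Finset.mem_filter, Finset.mem_Ico] at hj
        by_contra hnej
        have hj1 : j + 1 < s1 := by omega
        have e1 := hrun j hj.1.1 (by omega)
        have e2 := hrun (j + 1) (by omega) hj1
        omega
    have hcards : ((Finset.Ico s0 (k - 1)).filter (fun j => t j / 4 < t (j + 1) / 4)).card
        = ((Finset.Ico s0 s1).filter (fun j => t j / 4 < t (j + 1) / 4)).card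
          + ((Finset.Ico s1 (k - 1)).filter (fun j => t j / 4 < t (j + 1) / 4)).card := by
      rw [hsplit, Finset.filter_union, Finset.card_union_of_disjoint hdisj]
    simp only [hcnt]
    rw [hsing] at hcards
    simp at hcards
    omega
  -- main chain invariant
  have main : ∀ m, m ≤ C → sel t k m < k ∧ cnt (sel t k m) = C - m := by
    intro m
    induction m with
    | zero =>
      intro _
      have h0 : sel t k 0 = 0 := rfl
      rw [h0]
      exact ⟨hk0, by simpa using hcnt0⟩
    | succ m ih =>
      intro hm
      obtain ⟨h1, h2⟩ := ih (by omega)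
      have hpos : 0 < cnt (sel t k m) := by omega
      obtain ⟨ha, hb, hq, hrun⟩ := hselstep m h1 hpos
      have := hcntstep m h1 hpos
      exact ⟨hb, by omega⟩
  have key : ∀ m, m < C → sel t k m < sel t k (m + 1) ∧ sel t k (m + 1) < k ∧
      t (sel t k m) / 4 < t (sel t k (m + 1)) / 4 ∧
      ∀ j, sel t k m ≤ j → j < sel t k (m + 1) → t j / 4 = t (sel t k m) / 4 := by
    intro m hm
    obtain ⟨h1, h2⟩ := main m (by omega)
    exact hselstep m h1 (by omega)
  have selmono : ∀ m' , m' ≤ C → ∀ m, m < m' → sel t k m < sel t k m' := by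
    intro m'
    induction m' with
    | zero => omega
    | succ m' ih =>
      intro hm' m hm
      have hlast := (key m' (by omega)).1
      rcases Nat.eq_or_lt_of_le (Nat.lt_succ_iff.mp hm) with h | h
      · rw [h]; exact hlast
      · exact lt_trans (ih (by omega) m h) hlast
  -- small-cross set
  set SC := (Finset.range (k - 1)).filter
      (fun j => t j / 4 < t (j + 1) / 4 ∧ t (j + 1) ≤ t j + 2) with hSC
  -- case analysis for each quotient step
  have hcases : ∀ m, m < C →
      (t (sel t k (m + 1)) / 4 = t (sel t k m) / 4 + 1 ∧ (sel t k (m + 1) - 1) ∈ SC) ∨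
      ((t (sel t k (m + 1)) / 4 - t (sel t k m) / 4) ∈ D ∧
        QP r (t (sel t k (m + 1)) / 4) = QP r (t (sel t k m) / 4)) := by
    intro m hm
    obtain ⟨ha, hb, hq, hrun⟩ := key m hm
    have hj1 : sel t k (m + 1) - 1 + 1 = sel t k (m + 1) := by omega
    have hjk : (sel t k (m + 1) - 1) + 1 < k := by omega
    have hrq : t (sel t k (m + 1) - 1) / 4 = t (sel t k m) / 4 :=
      hrun (sel t k (m + 1) - 1) (by omega) (by omega)
    rcases hstep (sel t k (m + 1) - 1) hjk with hcase | hcase | hcase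
    · rw [hj1] at hcase
      omega
    · rw [hj1] at hcase
      left
      constructor
      · omega
      · rw [hSC, Finset.mem_filter, Finset.mem_range]
        refine ⟨by omega, ?_⟩
        rw [hj1]
        exact ⟨hcase.1, hcase.2.1⟩
    · have hbq := hbigq (sel t k (m + 1) - 1) hjk hcase.1 hcase.2.1
      rw [hj1] at hcase hbq
      rw [hrq] at hcase hbq
      right
      exact ⟨hcase.2.2, hbq⟩
  -- quotient flips inject into small crosses
  have hinjflip : ((Finset.range C).filter
      (fun m => QP r (t (sel t k (m + 1)) / 4) ≠ QP r (t (sel t k m) / 4))).card ≤ SC.card := by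
    apply Finset.card_le_card_of_injOn (fun m => sel t k (m + 1) - 1)
    · intro m hm
      rw [Finset.mem_coe, Finset.mem_filter, Finset.mem_range] at hm
      rcases hcases m hm.1 with ⟨_, hmem⟩ | ⟨_, heqq⟩
      · exact hmem
      · exact absurd heqq hm.2
    · intro m1 h1 m2 h2 heq
      simp only [Finset.coe_filter, Set.mem_setOf_eq, Finset.mem_range] at h1 h2
      have heq' : sel t k (m1 + 1) - 1 = sel t k (m2 + 1) - 1 := heq
      by_contra hne12
      have hs1 : sel t k m1 < sel t k (m1 + 1) := (key m1 h1.1).1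
      have hs2 : sel t k m2 < sel t k (m2 + 1) := (key m2 h2.1).1
      rcases Nat.lt_or_ge m1 m2 with hlt | hge
      · have := selmono (m2 + 1) (by omega) (m1 + 1) (by omega)
        omega
      · have := selmono (m1 + 1) (by omega) (m2 + 1) (by omega)
        omega
  -- within-block sets
  set W := (Finset.range (k - 1)).filter (fun j => ¬ t j / 4 < t (j + 1) / 4) with hW
  set Wf := (Finset.range (k - 1)).filter
      (fun j => ¬ t j / 4 < t (j + 1) / 4 ∧ t j % 4 ≤ 1 ∧ 2 ≤ t (j + 1) % 4) with hWf
  set W01 := (Finset.range (k - 1)).filter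
      (fun j => ¬ t j / 4 < t (j + 1) / 4 ∧ t j % 4 = 0 ∧ t (j + 1) % 4 = 1) with hW01
  set W23 := (Finset.range (k - 1)).filter
      (fun j => ¬ t j / 4 < t (j + 1) / 4 ∧ t j % 4 = 2 ∧ t (j + 1) % 4 = 3) with hW23
  set T2 := (Finset.range (k - 1)).filter
      (fun j => ¬ t j / 4 < t (j + 1) / 4 ∧ t (j + 1) % 4 = 2) with hT2
  have hqeq : ∀ j, j + 1 < k → ¬ t j / 4 < t (j + 1) / 4 → t j / 4 = t (j + 1) / 4 :=
    fun j hj hn => le_antisymm (hqmono j (j + 1) (by omega) hj) (by omega)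
  have hWfF : Wf.card ≤ h := by
    refine le_trans (Finset.card_le_card ?_) hfl
    intro j hj
    rw [hWf, Finset.mem_filter, Finset.mem_range] at hj
    rw [Finset.mem_filter, Finset.mem_range]
    obtain ⟨hjr, hnc, hx, hy⟩ := hj
    exact ⟨hjr, hwithinflip j (by omega) (hqeq j (by omega) hnc) hx hy⟩
  have hA1 := reset_count (n := k - 1) (fun i => t i % 4 = 0) W01 SC
    (by intro i hi; rw [hW01, Finset.mem_filter, Finset.mem_range] at hi; exact hi.1)
    (by
      intro i hi
      rw [hW01, Finset.mem_filter] at hi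
      omega)
    (by
      intro j hj hnP hP1
      have hxy := (hinc j (by omega)).1
      rcases hstep j (by omega) with hcase | hcase | hcase
      · omega
      · rw [hSC, Finset.mem_filter, Finset.mem_range]
        exact ⟨by omega, hcase.1, hcase.2.1⟩
      · omega)
  have hA2 := reset_count (n := k - 1) (fun i => t i % 4 = 2) W23 T2
    (by intro i hi; rw [hW23, Finset.mem_filter, Finset.mem_range] at hi; exact hi.1)
    (by
      intro i hi
      rw [hW23, Finset.mem_filter] at hi
      omega)
    (by
      intro j hj hnP hP1
      have hxy := (hinc j (by omega)).1
      rcases hstep j (by omega) with hcase | hcase | hcase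
      · rw [hT2, Finset.mem_filter, Finset.mem_range]
        exact ⟨by omega, by omega, hP1⟩
      · omega
      · omega)
  have hA3 := reset_count (n := k - 1) (fun i => 2 ≤ t i % 4) SC Wf
    (by intro i hi; rw [hSC, Finset.mem_filter, Finset.mem_range] at hi; exact hi.1)
    (by
      intro i hi
      rw [hSC, Finset.mem_filter, Finset.mem_range] at hi
      obtain ⟨hir, hcr, hsmall⟩ := hi
      have hxy := (hinc i (by omega)).1
      rcases hstep i (by omega) with hcase | hcase | hcase
      · omega
      · omega
      · omega)
    (by
      intro j hj hnP hP1
      have hxy := (hinc j (by omega)).1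
      rcases hstep j (by omega) with hcase | hcase | hcase
      · rw [hWf, Finset.mem_filter, Finset.mem_range]
        exact ⟨by omega, by omega, by omega, hP1⟩
      · omega
      · omega)
  have hT2Wf : T2.card ≤ Wf.card := by
    apply Finset.card_le_card
    intro j hj
    rw [hT2, Finset.mem_filter, Finset.mem_range] at hj
    rw [hWf, Finset.mem_filter, Finset.mem_range]
    obtain ⟨hjr, hnc, hy⟩ := hj
    have hxy := (hinc j (by omega)).1
    have := hqeq j (by omega) hnc
    exact ⟨hjr, hnc, by omega, by omega⟩
  have hWsub : W.card ≤ W01.card + W23.card + Wf.card := by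
    have hsub : W ⊆ W01 ∪ W23 ∪ Wf := by
      intro j hj
      rw [hW, Finset.mem_filter, Finset.mem_range] at hj
      obtain ⟨hjr, hnc⟩ := hj
      have hxy := (hinc j (by omega)).1
      have hqe := hqeq j (by omega) hnc
      rcases hstep j (by omega) with hcase | hcase | hcase
      · have hsplit3 : (t j % 4 = 0 ∧ t (j + 1) % 4 = 1) ∨ (t j % 4 = 2 ∧ t (j + 1) % 4 = 3)
            ∨ (t j % 4 ≤ 1 ∧ 2 ≤ t (j + 1) % 4) := by omega
        rcases hsplit3 with h3 | h3 | h3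
        · refine Finset.mem_union_left _ (Finset.mem_union_left _ ?_)
          rw [hW01, Finset.mem_filter, Finset.mem_range]
          exact ⟨hjr, hnc, h3.1, h3.2⟩
        · refine Finset.mem_union_left _ (Finset.mem_union_right _ ?_)
          rw [hW23, Finset.mem_filter, Finset.mem_range]
          exact ⟨hjr, hnc, h3.1, h3.2⟩
        · refine Finset.mem_union_right _ ?_
          rw [hWf, Finset.mem_filter, Finset.mem_range]
          exact ⟨hjr, hnc, h3.1, h3.2⟩
      · omega
      · omega
    calc W.card ≤ (W01 ∪ W23 ∪ Wf).card := Finset.card_le_card hsub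
      _ ≤ (W01 ∪ W23).card + Wf.card := Finset.card_union_le _ _
      _ ≤ W01.card + W23.card + Wf.card := by
          have := Finset.card_union_le W01 W23
          omega
  have hWcard : W.card ≤ 3 * h + 2 := by
    have h03 : t 0 % 4 = 0 ∨ t 0 % 4 = 1 ∨ t 0 % 4 = 2 ∨ t 0 % 4 = 3 := by omega
    rcases h03 with h0 | h0 | h0 | h0
    · have b1 := hA1.1
      have b2 := hA2.2 (by omega)
      have b3 := hA3.2 (by omega)
      omega
    · have b1 := hA1.2 (by omega)
      have b2 := hA2.2 (by omega)
      have b3 := hA3.2 (by omega)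
      omega
    · have b1 := hA1.2 (by omega)
      have b2 := hA2.1
      have b3 := hA3.1
      omega
    · have b1 := hA1.2 (by omega)
      have b2 := hA2.2 (by omega)
      have b3 := hA3.1
      omega
  have hSCcard : SC.card ≤ h + 1 := by
    have := hA3.1
    omega
  -- apply the induction hypothesis to the quotient sequence
  set u : ℕ → ℕ := fun m => t (sel t k m) / 4 with hu
  have hubd : ∀ m, m < C + 1 → u m < N * 4 ^ r := by
    intro m hm
    have h1 := (main m (by omega)).1
    have h2 := hbd _ h1
    have h3 : N * 4 ^ (r + 1) = N * 4 ^ r * 4 := by rw [pow_succ]; ring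
    simp only [hu]
    omega
  have huinc : ∀ m, m + 1 < C + 1 → u m < u (m + 1) ∧ u (m + 1) - u m ∈ D := by
    intro m hm
    have hq := (key m (by omega)).2.2.1
    simp only [hu]
    refine ⟨hq, ?_⟩
    rcases hcases m (by omega) with ⟨heq, _⟩ | ⟨hD', _⟩
    · have hone : t (sel t k (m + 1)) / 4 - t (sel t k m) / 4 = 1 := by omega
      rw [hone]
      exact ⟨0, rfl⟩
    · exact hD'
  have husm : ∀ m, m + 1 < C + 1 → QP r (u (m + 1)) ≠ QP r (u m) → u (m + 1) ≤ u m + 2 := by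
    intro m hm hne'
    simp only [hu] at hne' ⊢
    rcases hcases m (by omega) with ⟨heq, _⟩ | ⟨_, heqq⟩
    · omega
    · exact absurd heqq hne'
  have huflcard : ((Finset.range (C + 1 - 1)).filter
      (fun m => QP r (u (m + 1)) ≠ QP r (u m))).card ≤ h + 1 := by
    have hC1 : C + 1 - 1 = C := rfl
    rw [hC1]
    simp only [hu]
    exact le_trans hinjflip hSCcard
  have hIH := ihr N (h + 1) (C + 1) u hubd huinc husm huflcard
  -- put everything together
  have hk1 : CA.card + W.card = k - 1 := by
    have := Finset.card_filter_add_card_filter_not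
      (s := Finset.range (k - 1)) (p := fun j => t j / 4 < t (j + 1) / 4)
    rw [Finset.card_range] at this
    rw [hW, hCA]
    exact this
  have e1 : 6 * (r + 1) * h = 6 * r * h + 6 * h := by ring
  have e2 : 3 * (r + 1) ^ 2 = 3 * r ^ 2 + 6 * r + 3 := by ring
  have e3 : 6 * r * (h + 1) = 6 * r * h + 6 * r := by ring
  have hCW : C = CA.card := hC
  have hk2 : k = CA.card + W.card + 1 := by omega
  linarith [hIH, hWcard, hk2, e1, e2, e3]

lemma ML (r : ℕ) : ∀ (N h k : ℕ) (t : ℕ → ℕ),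
    (∀ i < k, t i < N * 4 ^ r) →
    (∀ i, i + 1 < k → t i < t (i + 1) ∧ t (i + 1) - t i ∈ D) →
    (∀ j, j + 1 < k → QP r (t (j + 1)) ≠ QP r (t j) → t (j + 1) ≤ t j + 2) →
    ((Finset.range (k - 1)).filter (fun j => QP r (t (j + 1)) ≠ QP r (t j))).card ≤ h →
    2 * k ≤ N + 1 + h + 6 * r * h + 3 * r ^ 2 + 2 * r := by
  induction r with
  | zero =>
    intro N h k t hbd hinc hsm hfl
    rcases Nat.eq_zero_or_pos k with hk | hk
    · omega
    have cl : ∀ j, j < k →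
        2 * j ≤ t j + ((Finset.range j).filter (fun j => QP 0 (t (j + 1)) ≠ QP 0 (t j))).card := by
      intro j
      induction j with
      | zero => simp
      | succ n ih =>
        intro hnk
        have hih := ih (by omega)
        have hst := hinc n (by omega)
        by_cases hfp : QP 0 (t (n + 1)) ≠ QP 0 (t n)
        · have hcard : ((Finset.range (n + 1)).filter
              (fun j => QP 0 (t (j + 1)) ≠ QP 0 (t j))).card =
              ((Finset.range n).filter (fun j => QP 0 (t (j + 1)) ≠ QP 0 (t j))).card + 1 := by
            rw [Finset.range_add_one, Finset.filter_insert, if_pos hfp,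
              Finset.card_insert_of_notMem (by simp)]
          omega
        · push_neg at hfp
          have hq1 := QP_zero (t (n + 1))
          have hq2 := QP_zero (t n)
          have hstep : t n + 2 ≤ t (n + 1) := by omega
          have hcard : ((Finset.range n).filter
              (fun j => QP 0 (t (j + 1)) ≠ QP 0 (t j))).card ≤
              ((Finset.range (n + 1)).filter (fun j => QP 0 (t (j + 1)) ≠ QP 0 (t j))).card :=
            Finset.card_le_card (Finset.filter_subset_filter _
              (Finset.range_subset_range.mpr (by omega)))
          omega
    have h1 := cl (k - 1) (by omega)
    have h2 := hbd (k - 1) (by omega)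
    simp only [pow_zero, mul_one] at h2
    omega
  | succ r ihr =>
    exact ML_step r ihr

theorem stmt_7 (l : ℕ) (hl : 1 ≤ l) (k : ℕ) (a : ℕ → ℕ)
    (ha : IsDiffseqIn (l * 4 ^ (l - 1)) k a)
    (hmono : ∃ c : Fin 2, ∀ i < k,
      (expand^[l - 1] fun i => Fin.ofNat 2 (i % 2 : ℕ)) (a i) = c) :
    k ≤ (3 * l ^ 2 - 3 * l + 2) / 2 := by
  obtain ⟨hbound, hstepa⟩ := ha
  obtain ⟨c, hc⟩ := hmono
  set t : ℕ → ℕ := fun i => a i - 1 with ht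
  have hQconst : ∀ i < k, QP (l - 1) (t i) = (c.val + 1) % 2 := by
    intro i hi
    have h1 := hbound i hi
    have hva := congrArg Fin.val (hc i hi)
    have hai : a i = t i + 1 := by simp only [ht]; omega
    rw [hai] at hva
    rw [expand_iter_val] at hva
    have hval : (Fin.ofNat 2 ((t i / 4 ^ (l - 1) + 1) % 2 : ℕ)).val
        = (t i / 4 ^ (l - 1) + 1) % 2 := by
      rw [Fin.val_ofNat]
      omega
    rw [hval] at hva
    have hcb := c.isLt
    unfold QP
    omega
  have hflipsempty : ((Finset.range (k - 1)).filter
      (fun j => QP (l - 1) (t (j + 1)) ≠ QP (l - 1) (t j))).card ≤ 0 := by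
    have hfalse : ∀ j ∈ Finset.range (k - 1),
        ¬ (QP (l - 1) (t (j + 1)) ≠ QP (l - 1) (t j)) := by
      intro j hj
      rw [Finset.mem_range] at hj
      rw [hQconst (j + 1) (by omega), hQconst j (by omega)]
      simp
    rw [Finset.filter_false_of_mem hfalse]
    simp
  have hML := ML (l - 1) l 0 k t
    (by
      intro i hi
      have := hbound i hi
      simp only [ht]
      omega)
    (by
      intro i hi
      have h1 := hbound i (by omega)
      have h2 := hbound (i + 1) hi
      have h3 := hstepa i hi
      constructor
      · simp only [ht]; omega
      · have hd : t (i + 1) - t i = a (i + 1) - a i := by simp only [ht]; omega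
        rw [hd]
        exact h3.2)
    (by
      intro j hj hne
      exfalso
      rw [hQconst (j + 1) (by omega), hQconst j (by omega)] at hne
      exact hne rfl)
    hflipsempty
  obtain ⟨q, hq⟩ : ∃ q, l = q + 1 := ⟨l - 1, by omega⟩
  subst hq
  rw [Nat.le_div_iff_mul_le (by norm_num : (0:ℕ) < 2)]
  have e2 : q + 1 - 1 = q := rfl
  rw [e2] at hML
  have e1 : 3 * (q + 1) ^ 2 = 3 * q ^ 2 + 6 * q + 3 := by ring
  have e3 : 6 * q * 0 = 0 := by ring
  omega
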